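/- Every finite-dimensional C*-algebra is semisimple: if A is a C*-algebra over ℂ (a complete normed star ℂ-algebra satisfying the C*-identity ‖a⋆ * a‖ = ‖a‖²) which is finite-dimensional as a ℂ-vector space, then A is a semisimple ring. -/

import Mathlib

open LinearMap Module Polynomial Matrix

/-- The trace form functional on an algebra: `x ↦ Tr (L_x)`. -/
noncomputable def cstarTr (A : Type*) [CStarAlgebra A] : A →ₗ[ℂ] ℂ :=
  (LinearMap.trace ℂ A).comp (LinearMap.mul ℂ A)

lemma cstarTr_apply {A : Type*} [CStarAlgebra A] (x : A) :
    cstarTr A x = LinearMap.trace ℂ A (LinearMap.mul ℂ A x) := rfl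

/-- A selfadjoint nilpotent element of a C*-algebra is zero. -/
lemma selfadjoint_nilpotent_eq_zero {A : Type*} [CStarAlgebra A] {x : A}
    (hx : IsSelfAdjoint x) (hn : IsNilpotent x) : x = 0 := by
  have key : ∀ k : ℕ, ‖x‖ ^ (2 ^ k) = ‖x ^ (2 ^ k)‖ := by
    intro k
    induction k with
    | zero => simp
    | succ k ih =>
      have hsa : IsSelfAdjoint (x ^ (2 ^ k)) := hx.pow _
      calc ‖x‖ ^ 2 ^ (k + 1) = ‖x‖ ^ 2 ^ k * ‖x‖ ^ 2 ^ k := by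
            rw [← pow_add, pow_succ, mul_two]
        _ = ‖x ^ 2 ^ k‖ * ‖x ^ 2 ^ k‖ := by rw [ih]
        _ = ‖star (x ^ 2 ^ k) * x ^ 2 ^ k‖ := (CStarRing.norm_star_mul_self).symm
        _ = ‖x ^ 2 ^ (k + 1)‖ := by rw [hsa.star_eq, ← pow_add, pow_succ, mul_two]
  obtain ⟨n, hn⟩ := hn
  have h2 : x ^ 2 ^ n = 0 := by
    have hle : n ≤ 2 ^ n := Nat.le_of_lt (Nat.lt_two_pow_self (n := n))
    calc x ^ 2 ^ n = x ^ n * x ^ (2 ^ n - n) := by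
          rw [← pow_add, Nat.add_sub_cancel' hle]
      _ = 0 := by rw [hn, zero_mul]
  have hk := key n
  rw [h2, norm_zero] at hk
  have : ‖x‖ = 0 := pow_eq_zero_iff (Nat.pos_of_ne_zero
    (by positivity)).ne' |>.mp hk
  exact norm_eq_zero.mp this

/-- Positivity (faithfulness) of the trace form on a finite-dimensional C*-algebra. -/
lemma cstarTr_faithful {A : Type*} [CStarAlgebra A] [FiniteDimensional ℂ A] (b : A)
    (h : cstarTr A (star b * b) = 0) : b = 0 := by
  set x := star b * b with hx_def
  have hxsa : IsSelfAdjoint x := IsSelfAdjoint.star_mul_self b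
  -- every element of the complex spectrum of `x` is a nonnegative real
  have hspec : ∀ μ ∈ spectrum ℂ x, ∃ r : ℝ, 0 ≤ r ∧ μ = (r : ℂ) := by
    intro μ hμ
    have hre : μ = (μ.re : ℂ) := hxsa.mem_spectrum_eq_re hμ
    refine ⟨μ.re, ?_, hre⟩
    have hμ' : (algebraMap ℝ ℂ) μ.re ∈ spectrum ℂ x := by
      rwa [Complex.coe_algebraMap, ← hre]
    exact spectrum_star_mul_self_nonneg _ (spectrum.of_algebraMap_mem ℂ hμ')
  set f : Module.End ℂ A := LinearMap.mul ℂ A x with hf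
  set bA := Module.finBasis ℂ A with hbA
  set M := LinearMap.toMatrix bA bA f with hM
  -- every root of the characteristic polynomial of `M` belongs to the spectrum of `x`
  have hroot : ∀ μ ∈ M.charpoly.roots, μ ∈ spectrum ℂ x := by
    intro μ hμ
    have h0 : Polynomial.eval μ M.charpoly = 0 := Polynomial.isRoot_of_mem_roots hμ
    have hdet : (Matrix.scalar (Fin (finrank ℂ A)) μ - M).det = 0 := by
      rw [Matrix.charpoly, _root_.eval_det, Matrix.matPolyEquiv_charmatrix,
        Polynomial.eval_sub, Polynomial.eval_X, Polynomial.eval_C] at h0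
      exact h0
    obtain ⟨v, hv0, hv⟩ := (Matrix.exists_mulVec_eq_zero_iff).mpr hdet
    have hscal : (Matrix.scalar (Fin (finrank ℂ A)) μ) *ᵥ v = μ • v := by
      ext i
      simp [Matrix.scalar, Matrix.mulVec_diagonal]
    have hMv : M *ᵥ v = μ • v := by
      rw [Matrix.sub_mulVec, hscal, sub_eq_zero] at hv
      exact hv.symm
    -- transport eigenvector to `A`
    set a : A := bA.repr.symm (Finsupp.equivFunOnFinite.symm v) with ha_def
    have hrepr : ⇑(bA.repr a) = v := by
      rw [ha_def, LinearEquiv.apply_symm_apply]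
      ext i; simp
    have ha0 : a ≠ 0 := by
      intro hcon
      apply hv0
      rw [← hrepr, hcon, map_zero]
      rfl
    have hfa : f a = μ • a := by
      apply bA.repr.injective
      apply DFunLike.coe_injective
      show ⇑(bA.repr (f a)) = ⇑(bA.repr (μ • a))
      have h1 := LinearMap.toMatrix_mulVec_repr bA bA f a
      rw [hrepr, ← hM, hMv] at h1
      rw [← h1, _root_.map_smul]
      funext i
      simp [hrepr]
    have hxa : x * a = μ • a := by
      simpa [hf, LinearMap.mul_apply'] using hfa
    rw [spectrum.mem_iff]
    intro hunit
    obtain ⟨u, hu⟩ := hunit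
    apply ha0
    have hz : (algebraMap ℂ A μ - x) * a = 0 := by
      rw [sub_mul, Algebra.algebraMap_eq_smul_one, smul_mul_assoc, one_mul, hxa, sub_self]
    calc a = (↑u⁻¹ * ↑u) * a := by rw [u.inv_mul, one_mul]
      _ = ↑u⁻¹ * ((↑u : A) * a) := by rw [mul_assoc]
      _ = 0 := by rw [hu, hz, mul_zero]
  -- the trace of `L_x` is the sum of the roots of the characteristic polynomial
  have htr : cstarTr A x = M.charpoly.roots.sum := by
    rw [cstarTr_apply, ← hf, LinearMap.trace_eq_matrix_trace ℂ bA f, ← hM,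
      Matrix.trace_eq_sum_roots_charpoly]
  have hsum : M.charpoly.roots.sum = 0 := by rw [← htr, h]
  -- all roots are zero
  have hre_sum : ((M.charpoly.roots.map Complex.re).sum : ℝ) = 0 := by
    rw [← Complex.coe_reAddGroupHom, ← map_multiset_sum, hsum, map_zero]
  have hnonneg : ∀ y ∈ M.charpoly.roots.map Complex.re, (0 : ℝ) ≤ y := by
    intro y hy
    obtain ⟨μ, hμ, rfl⟩ := Multiset.mem_map.mp hy
    obtain ⟨r, hr0, hrμ⟩ := hspec μ (hroot μ hμ)
    rw [hrμ]; simpa using hr0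
  have hall : ∀ μ ∈ M.charpoly.roots, μ = 0 := by
    intro μ hμ
    obtain ⟨r, hr0, hrμ⟩ := hspec μ (hroot μ hμ)
    have hmem : μ.re ∈ M.charpoly.roots.map Complex.re :=
      Multiset.mem_map.mpr ⟨μ, hμ, rfl⟩
    have hle : μ.re ≤ (M.charpoly.roots.map Complex.re).sum :=
      Multiset.single_le_sum hnonneg _ hmem
    have hge : (0 : ℝ) ≤ μ.re := hnonneg _ hmem
    have hre0 : μ.re = 0 := le_antisymm (hre_sum ▸ hle) hge
    have := hxsa.mem_spectrum_eq_re (hroot μ hμ)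
    rw [this, hre0]; simp
  -- hence the characteristic polynomial is `X ^ n` and `L_x` is nilpotent
  have hsplits : M.charpoly.Splits := IsAlgClosed.splits _
  have hcard : Multiset.card M.charpoly.roots = finrank ℂ A := by
    rw [(Polynomial.splits_iff_card_roots).mp hsplits, Matrix.charpoly_natDegree_eq_dim,
      Fintype.card_fin]
  have hXn : M.charpoly = X ^ finrank ℂ A := by
    have hfac := hsplits.eq_prod_roots_of_monic M.charpoly_monic
    rw [hfac]
    have : M.charpoly.roots.map (fun a => X - C a) =
        Multiset.replicate (Multiset.card M.charpoly.roots) (X : ℂ[X]) := by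
      apply Multiset.eq_replicate.mpr
      refine ⟨Multiset.card_map _ _, ?_⟩
      intro p hp
      obtain ⟨μ, hμ, rfl⟩ := Multiset.mem_map.mp hp
      rw [hall μ hμ, map_zero, sub_zero]
    rw [this, Multiset.prod_replicate, hcard]
  have hcf : f.charpoly = X ^ finrank ℂ A := by
    rw [← f.charpoly_toMatrix bA, ← hM, hXn]
  have hnilf : IsNilpotent f := (LinearMap.isNilpotent_iff_charpoly f).mpr hcf
  -- hence `x` is nilpotent, selfadjoint, so zero
  have hpow : ∀ k : ℕ, (f ^ k) 1 = x ^ k := by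
    intro k
    induction k with
    | zero => simp
    | succ k ih =>
      rw [pow_succ', pow_succ']
      simp only [Module.End.mul_apply, hf]
      rw [ih]
      simp [LinearMap.mul_apply']
  have hnilx : IsNilpotent x := by
    obtain ⟨k, hk⟩ := hnilf
    refine ⟨k, ?_⟩
    rw [← hpow k, hk]
    rfl
  have hx0 : x = 0 := selfadjoint_nilpotent_eq_zero hxsa hnilx
  have : ‖b‖ * ‖b‖ = 0 := by
    rw [← CStarRing.norm_star_mul_self, ← hx_def, hx0, norm_zero]
  exact norm_eq_zero.mp (mul_self_eq_zero.mp this)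

/-- Every finite-dimensional C*-algebra is semisimple: if `A` is a
C*-algebra over `ℂ` which is finite-dimensional as a `ℂ`-vector space, then `A` is a
semisimple ring. -/
theorem cstar_finiteDimensional_semisimple
    (A : Type*) [CStarAlgebra A] [FiniteDimensional ℂ A] :
    IsSemisimpleRing A := by
  refine { exists_isCompl := ?_ }
  intro I
  -- the "orthogonal complement" of `I` with respect to the trace form
  let J : Submodule A A :=
    { carrier := {c | ∀ a ∈ I, cstarTr A (star a * c) = 0}
      add_mem' := by
        intro p q hp hq a ha
        rw [mul_add, map_add, hp a ha, hq a ha, add_zero]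
      zero_mem' := by
        intro a ha
        rw [mul_zero, map_zero]
      smul_mem' := by
        intro y p hp a ha
        have h1 : star a * (y • p) = star (star y * a) * p := by
          rw [_root_.smul_eq_mul, StarMul.star_mul, star_star, mul_assoc]
        rw [h1]
        exact hp (star y * a) (by simpa using I.smul_mem (star y) ha) }
  have hJmem : ∀ c : A, c ∈ J ↔ ∀ a ∈ I, cstarTr A (star a * c) = 0 := fun _ => Iff.rfl
  refine ⟨J, ?_, ?_⟩
  · -- disjointness
    rw [Submodule.disjoint_def]
    intro c hcI hcJ
    exact cstarTr_faithful c ((hJmem c).mp hcJ c hcI)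
  · -- codisjointness, via a dimension count over `ℂ`
    set I' := I.restrictScalars ℂ with hI'
    set J' := J.restrictScalars ℂ with hJ'
    set m := finrank ℂ I' with hm
    set v := Module.finBasis ℂ I' with hv
    set ρ : A →ₗ[ℂ] (Fin m → ℂ) :=
      LinearMap.pi (fun i => (cstarTr A).comp (LinearMap.mul ℂ A (star ((v i : I') : A))))
      with hρ
    have hker : J' = LinearMap.ker ρ := by
      ext c
      constructor
      · intro hc
        rw [LinearMap.mem_ker]
        funext i
        exact hc ((v i : I') : A) (v i).2
      · intro hc a ha
        have hrepr : (⟨a, ha⟩ : I') = ∑ i, v.repr ⟨a, ha⟩ i • v i := (v.sum_repr _).symm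
        have ha' : a = ∑ i, v.repr ⟨a, ha⟩ i • ((v i : I') : A) := by
          have := congrArg (Subtype.val) hrepr
          simpa only [Submodule.coe_sum, Submodule.coe_smul] using this
        have hc' : ∀ i, cstarTr A (star ((v i : I') : A) * c) = 0 := by
          intro i
          exact congrFun (LinearMap.mem_ker.mp hc) i
        rw [ha', star_sum, Finset.sum_mul, map_sum]
        apply Finset.sum_eq_zero
        intro i _
        rw [star_smul, smul_mul_assoc, _root_.map_smul, hc' i, smul_zero]
    have hdisj' : Disjoint I' J' := by
      rw [Submodule.disjoint_def]
      intro c hcI hcJ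
      exact cstarTr_faithful c (hcJ c hcI)
    have hrank : finrank ℂ A ≤ finrank ℂ I' + finrank ℂ J' := by
      have h1 := LinearMap.finrank_range_add_finrank_ker ρ
      have h2 : finrank ℂ (LinearMap.range ρ) ≤ m := by
        have h3 := Submodule.finrank_le (LinearMap.range ρ)
        rwa [Module.finrank_fin_fun] at h3
      rw [hker]
      omega
    have hsup' : I' ⊔ J' = ⊤ := by
      apply Submodule.eq_top_of_finrank_eq
      have hle := Submodule.finrank_le (I' ⊔ J')
      have heq := Submodule.finrank_sup_add_finrank_inf_eq I' J'
      rw [disjoint_iff.mp hdisj', finrank_bot] at heq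
      omega
    rw [codisjoint_iff, eq_top_iff]
    intro c _
    have hc : c ∈ I' ⊔ J' := by rw [hsup']; trivial
    obtain ⟨y, hy, z, hz, rfl⟩ := Submodule.mem_sup.mp hc
    exact Submodule.add_mem_sup hy hz
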